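/- Let μ be a non-atomic Borel probability measure on [0,1]. Given q ≥ 0 and 0 ≤ a ≤ b, there exist a constant c₁ > 0 and r₀ > 0 such that for all 0 < r ≤ r₀: c₁ · Σ_{B ∈ B_r^*} μ(B̄^b)^q ≤ Σ_{B ∈ B_r^*} μ(B̄^a)^q ≤ Σ_{B ∈ B_r^*} μ(B̄^b)^q. -/

import Mathlib

open MeasureTheory Filter Set
open scoped Classical

noncomputable section

/-- The enlargement `B̄^a` of the interval `[s,t]` by the factor `1+a` about its centre. -/
def enlarge (a s t : ℝ) : Set ℝ :=
  Set.Icc (s - a * (t - s) / 2) (t + a * (t - s) / 2)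

/-- The moment sum `Σ_{B ∈ B_r^*} μ(B̄^a)^q` over grid intervals of length `r`
whose interior meets the support of `μ` (i.e. with `μ(B) > 0`). -/
def gridSum (μ : Measure ℝ) (a q R : ℝ) : ℝ :=
  ∑' m : ℤ, if 0 < μ (Set.Icc ((m : ℝ) * R) (((m : ℝ) + 1) * R))
    then (μ (enlarge a ((m : ℝ) * R) (((m : ℝ) + 1) * R))).toReal ^ q else 0

/-- The coarse multifractal moment function
`β_a(q) = inf{β : limsup_{r→0⁺} r^β Σ_{B ∈ B_r^*} μ(B̄^a)^q = 0}`.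
(For the nonnegative quantity `r^β · Σ…`, vanishing of the `limsup` as `r → 0⁺`
is the same as convergence to `0`.) -/
def betaA (μ : Measure ℝ) (a q : ℝ) : ℝ :=
  sInf {β : ℝ | Filter.Tendsto (fun R => R ^ β * gridSum μ a q R)
    (nhdsWithin 0 (Set.Ioi 0)) (nhds 0)}

/-- `F` is a "fractal subset" of `[0,1]`: compact, Lebesgue-null, containing `0` and `1`. -/
def IsFractalSubset (F : Set ℝ) : Prop :=
  IsCompact F ∧ F ⊆ Set.Icc 0 1 ∧ (0 : ℝ) ∈ F ∧ (1 : ℝ) ∈ F ∧ MeasureTheory.volume F = 0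

/-- The complementary intervals `I_n = (l n, r n)` of `F` in `[0,1]`, enumerated with
nonincreasing lengths. -/
structure FractalComplement (F : Set ℝ) where
  l : ℕ → ℝ
  r : ℕ → ℝ
  lt : ∀ n, l n < r n
  disj : Pairwise fun n m => Disjoint (Set.Ioo (l n) (r n)) (Set.Ioo (l m) (r m))
  union : (⋃ n, Set.Ioo (l n) (r n)) = Set.Icc (0 : ℝ) 1 \ F
  mono : ∀ n, r (n + 1) - l (n + 1) ≤ r n - l n

/-- The length `|I_n|` of the `n`-th complementary interval. -/
def FractalComplement.len {F : Set ℝ} (c : FractalComplement F) (n : ℕ) : ℝ := c.r n - c.l n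

/-- The enlargement `Ī_n^a` of the closure of the complementary interval `I_n`. -/
def FractalComplement.I {F : Set ℝ} (c : FractalComplement F) (a : ℝ) (n : ℕ) : Set ℝ :=
  enlarge a (c.l n) (c.r n)

/-- The lacunarity condition with constant `lam`: every interval `[x-r, x+r]` with `x ∈ F`
and `0 < r ≤ 1` contains a complementary interval of length at least `lam * r`. -/
def Lacunary {F : Set ℝ} (c : FractalComplement F) (lam : ℝ) : Prop :=
  ∀ x ∈ F, ∀ R : ℝ, 0 < R → R ≤ 1 → ∃ n,
    Set.Ioo (c.l n) (c.r n) ⊆ Set.Icc (x - R) (x + R) ∧ lam * R ≤ c.len n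

/-- The topological support of `μ` is exactly `F`. -/
def HasSupport (μ : Measure ℝ) (F : Set ℝ) : Prop :=
  μ Fᶜ = 0 ∧ ∀ x ∈ F, ∀ ε : ℝ, 0 < ε → 0 < μ (Set.Ioo (x - ε) (x + ε))

lemma enlarge_subset_enlarge {a b s t : ℝ} (hab : a ≤ b) (hst : s ≤ t) :
    enlarge a s t ⊆ enlarge b s t := by
  apply Set.Icc_subset_Icc <;> nlinarith

lemma subset_enlarge {a s t : ℝ} (ha : 0 ≤ a) (hst : s ≤ t) :
    Set.Icc s t ⊆ enlarge a s t := by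
  apply Set.Icc_subset_Icc <;> nlinarith

lemma cover_lemma {R : ℝ} (hR : 0 < R) (m : ℤ) (K : ℕ) :
    Set.Icc ((m : ℝ) * R - K * R) (((m : ℝ) + 1) * R + K * R) ⊆
      ⋃ k ∈ Finset.Icc (-(K : ℤ)) (K : ℤ),
        Set.Icc (((m + k : ℤ) : ℝ) * R) ((((m + k : ℤ) : ℝ) + 1) * R) := by
  intro x hx
  obtain ⟨hx1, hx2⟩ := hx
  set j : ℤ := min ⌊x / R⌋ (m + K) with hj
  have hfl : ((m : ℤ) - K : ℤ) ≤ ⌊x / R⌋ := by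
    rw [Int.le_floor]
    rw [le_div_iff₀ hR]
    push_cast
    linarith
  have hjlb : m - (K : ℤ) ≤ j := le_min hfl (by omega)
  have hjub : j ≤ m + (K : ℤ) := min_le_right _ _
  have hj1 : (j : ℝ) * R ≤ x := by
    have h1 : (j : ℝ) ≤ x / R := le_trans (by exact_mod_cast Int.cast_le.mpr (min_le_left _ _))
      (Int.floor_le _)
    calc (j : ℝ) * R ≤ (x / R) * R := by nlinarith
    _ = x := by field_simp
  have hj2 : x ≤ ((j : ℝ) + 1) * R := by
    rcases le_or_gt ⌊x / R⌋ (m + K) with h | h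
    · have hje : j = ⌊x / R⌋ := min_eq_left h
      have := Int.lt_floor_add_one (x / R)
      rw [hje]
      have : x / R < (((⌊x / R⌋ : ℤ) : ℝ) + 1) := Int.lt_floor_add_one (x / R)
      nlinarith [(div_lt_iff₀ hR).mp this]
    · have hje : j = m + K := min_eq_right h.le
      rw [hje]
      push_cast
      linarith
  refine Set.mem_biUnion (show j - m ∈ Finset.Icc (-(K : ℤ)) (K : ℤ) by
    simp only [Finset.mem_Icc]; omega) ?_
  have : m + (j - m) = j := by ring
  rw [this]
  exact ⟨hj1, hj2⟩

/-- for `q ≥ 0` and `0 ≤ a ≤ b` the enlarged grid moment sums for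
parameters `a` and `b` are comparable. -/
theorem stmt_3 (μ : Measure ℝ) [IsProbabilityMeasure μ] [NullSingletonClass μ]
    (hsupp : μ (Set.Icc (0 : ℝ) 1)ᶜ = 0)
    (q a b : ℝ) (hq : 0 ≤ q) (ha : 0 ≤ a) (hab : a ≤ b) :
    ∃ c₁ r₀ : ℝ, 0 < c₁ ∧ 0 < r₀ ∧ ∀ R : ℝ, 0 < R → R ≤ r₀ →
      c₁ * gridSum μ b q R ≤ gridSum μ a q R ∧
      gridSum μ a q R ≤ gridSum μ b q R := by
  classical
  set K : ℕ := ⌈b / 2⌉₊ + 1 with hKdef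
  set N : ℕ := 2 * K + 1 with hNdef
  have hNpos : (0 : ℝ) < (N : ℝ) := by positivity
  have hpow : (0 : ℝ) < (N : ℝ) ^ (q + 1) := Real.rpow_pos_of_pos hNpos _
  refine ⟨((N : ℝ) ^ (q + 1))⁻¹, 1, inv_pos.mpr hpow, one_pos, fun R hR _ => ?_⟩
  -- notation
  set B : ℤ → Set ℝ := fun m => Set.Icc ((m : ℝ) * R) (((m : ℝ) + 1) * R) with hBdef
  set f : ℤ → ℝ := fun m => if 0 < μ (B m)
    then (μ (enlarge a ((m : ℝ) * R) (((m : ℝ) + 1) * R))).toReal ^ q else 0 with hfdef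
  set g : ℤ → ℝ := fun m => if 0 < μ (B m)
    then (μ (enlarge b ((m : ℝ) * R) (((m : ℝ) + 1) * R))).toReal ^ q else 0 with hgdef
  have hst : ∀ m : ℤ, (m : ℝ) * R ≤ ((m : ℝ) + 1) * R := by
    intro m; nlinarith
  have hfnn : ∀ m, 0 ≤ f m := by
    intro m; simp only [hfdef]
    split <;> positivity
  have hgnn : ∀ m, 0 ≤ g m := by
    intro m; simp only [hgdef]
    split <;> positivity
  -- support bound
  set S : Finset ℤ := Finset.Icc (-1 : ℤ) ⌈1 / R⌉ with hSdef
  have hsupport : ∀ m : ℤ, 0 < μ (B m) → m ∈ S := by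
    intro m hm
    by_contra hms
    have hcompl : B m ⊆ (Set.Icc (0 : ℝ) 1)ᶜ := by
      simp only [hSdef, Finset.mem_Icc, not_and_or, not_le] at hms
      intro x hx
      obtain ⟨hx1, hx2⟩ := hx
      simp only [Set.mem_compl_iff, Set.mem_Icc, not_and_or, not_le]
      rcases hms with h | h
      · left
        have : (m : ℝ) + 1 ≤ -1 := by exact_mod_cast (by omega : m + 1 ≤ (-1 : ℤ))
        nlinarith
      · right
        have h2 : (1 : ℝ) / R < (m : ℝ) := by
          have := Int.ceil_lt_iff.mp h  -- ⌈1/R⌉ < m ↔ ?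
          exact_mod_cast (Int.ceil_le.mp (by omega : ⌈1 / R⌉ ≤ m - 1)).trans_lt (by push_cast; linarith)
        have : 1 < (m : ℝ) * R := by
          rw [div_lt_iff₀ hR] at h2; linarith
        nlinarith
    have : μ (B m) = 0 := measure_mono_null hcompl hsupp
    rw [this] at hm; exact lt_irrefl _ hm
  have hf0 : ∀ m ∉ S, f m = 0 := by
    intro m hm
    simp only [hfdef]
    rw [if_neg (fun h => hm (hsupport m h))]
  have hg0 : ∀ m ∉ S, g m = 0 := by
    intro m hm
    simp only [hgdef]
    rw [if_neg (fun h => hm (hsupport m h))]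
  have hfsummable : Summable f := summable_of_ne_finset_zero hf0
  have hsum_a : gridSum μ a q R = ∑ m ∈ S, f m := tsum_eq_sum hf0
  have hsum_b : gridSum μ b q R = ∑ m ∈ S, g m := tsum_eq_sum hg0
  -- upper bound : termwise
  have hub : gridSum μ a q R ≤ gridSum μ b q R := by
    rw [hsum_a, hsum_b]
    apply Finset.sum_le_sum
    intro m _
    simp only [hfdef, hgdef]
    split
    · apply Real.rpow_le_rpow ENNReal.toReal_nonneg _ hq
      exact ENNReal.toReal_mono (measure_ne_top μ _)
        (measure_mono (enlarge_subset_enlarge hab (hst m)))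
    · exact le_rfl
  refine ⟨?_, hub⟩
  -- lower bound
  have hGa_eq : (∑' m, f m) = gridSum μ a q R := rfl
  have hGa_nonneg : 0 ≤ gridSum μ a q R := by
    rw [hsum_a]; exact Finset.sum_nonneg fun m _ => hfnn m
  set T : Finset ℤ := Finset.Icc (-(K : ℤ)) (K : ℤ) with hTdef
  have hTcard : T.card = N := by
    rw [hTdef, Int.card_Icc]; omega
  have hb2K : b / 2 ≤ (K : ℝ) := by
    refine le_trans (Nat.le_ceil _) ?_
    exact_mod_cast Nat.le_succ _
  have hkey : ∀ m : ℤ, g m ≤ (N : ℝ) ^ q * ∑ k ∈ T, f (m + k) := by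
    intro m
    by_cases hm : 0 < μ (B m)
    · set u : ℤ → ℝ := fun k => if 0 < μ (B (m + k))
        then (μ (enlarge a (((m + k : ℤ) : ℝ) * R) ((((m + k : ℤ) : ℝ) + 1) * R))).toReal else 0
        with hudef
      have hTne : (0 : ℤ) ∈ T := by simp [hTdef]
      have hunn : ∀ k, 0 ≤ u k := fun k => by
        simp only [hudef]; split; exacts [ENNReal.toReal_nonneg, le_rfl]
      have hcov : enlarge b ((m : ℝ) * R) (((m : ℝ) + 1) * R) ⊆
          ⋃ k ∈ T, Set.Icc (((m + k : ℤ) : ℝ) * R) ((((m + k : ℤ) : ℝ) + 1) * R) := by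
        refine subset_trans ?_ (cover_lemma hR m K)
        intro x hx
        obtain ⟨hx1, hx2⟩ := hx
        constructor
        · have hbr : b * (((m : ℝ) + 1) * R - (m : ℝ) * R) / 2 ≤ (K : ℝ) * R := by nlinarith
          linarith
        · have hbr : b * (((m : ℝ) + 1) * R - (m : ℝ) * R) / 2 ≤ (K : ℝ) * R := by nlinarith
          linarith
      have hmeas : μ (enlarge b ((m : ℝ) * R) (((m : ℝ) + 1) * R)) ≤
          ∑ k ∈ T, μ (Set.Icc (((m + k : ℤ) : ℝ) * R) ((((m + k : ℤ) : ℝ) + 1) * R)) :=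
        le_trans (measure_mono hcov) (measure_biUnion_finset_le T _)
      have htr : (μ (enlarge b ((m : ℝ) * R) (((m : ℝ) + 1) * R))).toReal ≤ ∑ k ∈ T, u k := by
        have hne : ∀ k ∈ T,
            μ (Set.Icc (((m + k : ℤ) : ℝ) * R) ((((m + k : ℤ) : ℝ) + 1) * R)) ≠ ⊤ :=
          fun k _ => measure_ne_top μ _
        have hsne : (∑ k ∈ T,
            μ (Set.Icc (((m + k : ℤ) : ℝ) * R) ((((m + k : ℤ) : ℝ) + 1) * R))) ≠ ⊤ := by
          simp only [ne_eq, ENNReal.sum_eq_top, not_exists]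
          intro k hk
          exact hne k hk.1 hk.2
        have h2 := ENNReal.toReal_mono hsne hmeas
        rw [ENNReal.toReal_sum hne] at h2
        refine h2.trans (Finset.sum_le_sum fun k hk => ?_)
        by_cases hk' : 0 < μ (B (m + k))
        · simp only [hudef]; rw [if_pos hk']
          exact ENNReal.toReal_mono (measure_ne_top μ _)
            (measure_mono (subset_enlarge ha (hst _)))
        · have h0 : μ (B (m + k)) = 0 := le_antisymm (not_lt.mp hk') zero_le
          simp only [hudef]; rw [if_neg hk']
          have h0' : μ (Set.Icc (((m + k : ℤ) : ℝ) * R) ((((m + k : ℤ) : ℝ) + 1) * R)) = 0 := h0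
          rw [h0']
          simp
      obtain ⟨k0, hk0T, hk0max⟩ := T.exists_max_image u ⟨0, hTne⟩
      have hu00 : 0 < u 0 := by
        simp only [hudef]
        rw [if_pos (show 0 < μ (B (m + 0)) by simpa using hm)]
        refine ENNReal.toReal_pos ?_ (measure_ne_top μ _)
        refine (lt_of_lt_of_le ?_ (measure_mono (subset_enlarge ha (hst (m + 0))))).ne'
        simpa using hm
      have huk0 : 0 < u k0 := lt_of_lt_of_le hu00 (hk0max 0 hTne)
      have hind : 0 < μ (B (m + k0)) := by
        by_contra h
        simp only [hudef] at huk0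
        rw [if_neg h] at huk0
        exact lt_irrefl _ huk0
      have hsumu : ∑ k ∈ T, u k ≤ (N : ℝ) * u k0 := by
        have h3 := Finset.sum_le_card_nsmul T u (u k0) (fun k hk => hk0max k hk)
        rwa [hTcard, nsmul_eq_mul] at h3
      have hgm : g m = (μ (enlarge b ((m : ℝ) * R) (((m : ℝ) + 1) * R))).toReal ^ q := by
        simp only [hgdef]; rw [if_pos hm]
      rw [hgm]
      calc (μ (enlarge b ((m : ℝ) * R) (((m : ℝ) + 1) * R))).toReal ^ q
          ≤ ((N : ℝ) * u k0) ^ q :=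
            Real.rpow_le_rpow ENNReal.toReal_nonneg (htr.trans hsumu) hq
        _ = (N : ℝ) ^ q * (u k0) ^ q := Real.mul_rpow hNpos.le (hunn k0)
        _ ≤ (N : ℝ) ^ q * ∑ k ∈ T, f (m + k) := by
            apply mul_le_mul_of_nonneg_left _ (Real.rpow_nonneg hNpos.le q)
            have h4 : (u k0) ^ q = f (m + k0) := by
              simp only [hudef, hfdef]; rw [if_pos hind, if_pos hind]
            rw [h4]
            exact Finset.single_le_sum (fun k _ => hfnn _) hk0T
    · have : g m = 0 := by simp only [hgdef]; rw [if_neg hm]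
      rw [this]
      exact mul_nonneg (Real.rpow_nonneg hNpos.le q) (Finset.sum_nonneg fun k _ => hfnn _)
  have hshift : ∀ k : ℤ, ∑ m ∈ S, f (m + k) ≤ gridSum μ a q R := by
    intro k
    have h1 : ∑ m ∈ S, f (m + k) = ∑ m ∈ S.map (addRightEmbedding k), f m := by
      rw [Finset.sum_map]; rfl
    rw [h1, ← hGa_eq]
    exact Summable.sum_le_tsum _ (fun m _ => hfnn m) hfsummable
  calc ((N : ℝ) ^ (q + 1))⁻¹ * gridSum μ b q R
      ≤ ((N : ℝ) ^ (q + 1))⁻¹ * ((N : ℝ) ^ (q + 1) * gridSum μ a q R) := by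
        apply mul_le_mul_of_nonneg_left _ (inv_nonneg.mpr hpow.le)
        calc gridSum μ b q R = ∑ m ∈ S, g m := hsum_b
          _ ≤ ∑ m ∈ S, (N : ℝ) ^ q * ∑ k ∈ T, f (m + k) :=
              Finset.sum_le_sum fun m _ => hkey m
          _ = (N : ℝ) ^ q * ∑ k ∈ T, ∑ m ∈ S, f (m + k) := by
              rw [← Finset.mul_sum, Finset.sum_comm]
          _ ≤ (N : ℝ) ^ q * ∑ k ∈ T, gridSum μ a q R := by
              apply mul_le_mul_of_nonneg_left _ (Real.rpow_nonneg hNpos.le q)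
              exact Finset.sum_le_sum fun k _ => hshift k
          _ = (N : ℝ) ^ q * ((N : ℝ) * gridSum μ a q R) := by
              rw [Finset.sum_const, hTcard, nsmul_eq_mul]
          _ = (N : ℝ) ^ (q + 1) * gridSum μ a q R := by
              rw [Real.rpow_add_one hNpos.ne' q]; ring
    _ = gridSum μ a q R := by
        rw [← mul_assoc, inv_mul_cancel₀ hpow.ne']; ring
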